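/- arXiv:2006.05689 — 2 statements merged into one kernel-verified Lean document; each statement's English description precedes it below -/
import Mathlib

section
/- For every $k\in\mathbb{N}$ there exist constants $C_k,D_k>0$ such that for all Schwartz functions $\phi$ on $\mathbb{R}$: $\|x^{2k}\phi\|_{L^2(\mathbb{R})}\le C_k\|H^k\phi\|_{L^2(\mathbb{R})}$ and $\|H(x^{2(k-1)}\phi)\|_{L^2(\mathbb{R})}\le D_k\|H^k\phi\|_{L^2(\mathbb{R})}$, where $H\phi=-\phi''+x^2\phi$. -/
open MeasureTheory Filter SchwartzMap

noncomputable section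

/-- The one-dimensional Hermite operator `H = -d²/dx² + x²`. -/
def hermiteOp1 (f : ℝ → ℝ) : ℝ → ℝ :=
  fun x => -(deriv (deriv f) x) + x ^ 2 * f x

namespace HermiteAux

lemma htg_mul {f g : ℝ → ℝ} (hf : Function.HasTemperateGrowth f)
    (hg : Function.HasTemperateGrowth g) :
    Function.HasTemperateGrowth (fun x => f x * g x) := by
  refine ⟨hf.1.mul hg.1, fun n => ?_⟩
  obtain ⟨k1, C1, hC1, h1⟩ := hf.norm_iteratedFDeriv_le_uniform n
  obtain ⟨k2, C2, hC2, h2⟩ := hg.norm_iteratedFDeriv_le_uniform n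
  refine ⟨k1 + k2, 2 ^ n * (C1 * C2), fun x => ?_⟩
  calc ‖iteratedFDeriv ℝ n (fun y => f y * g y) x‖
      ≤ ∑ i ∈ Finset.range (n + 1), (n.choose i : ℝ) * ‖iteratedFDeriv ℝ i f x‖ *
          ‖iteratedFDeriv ℝ (n - i) g x‖ :=
        norm_iteratedFDeriv_mul_le hf.1 hg.1 x (by exact_mod_cast le_top)
    _ ≤ ∑ i ∈ Finset.range (n + 1), (n.choose i : ℝ) *
          ((C1 * (1 + ‖x‖) ^ k1) * (C2 * (1 + ‖x‖) ^ k2)) := by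
        refine Finset.sum_le_sum fun i hi => ?_
        rw [mul_assoc]
        refine mul_le_mul_of_nonneg_left ?_ (by positivity)
        have hi' := Finset.mem_range_succ_iff.mp hi
        exact mul_le_mul (h1 i hi' x) (h2 (n - i) (by omega) x) (norm_nonneg _)
          (by positivity)
    _ = (2 ^ n : ℝ) * ((C1 * (1 + ‖x‖) ^ k1) * (C2 * (1 + ‖x‖) ^ k2)) := by
        rw [← Finset.sum_mul]
        norm_cast
        rw [Nat.sum_range_choose]
    _ ≤ 2 ^ n * (C1 * C2) * (1 + ‖x‖) ^ (k1 + k2) := by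
        rw [pow_add]; ring_nf; exact le_refl _

lemma htg_id : Function.HasTemperateGrowth (fun x : ℝ => x) := by
  exact (ContinuousLinearMap.id ℝ ℝ).hasTemperateGrowth

lemma htg_pow (n : ℕ) : Function.HasTemperateGrowth (fun x : ℝ => x ^ n) := by
  induction n with
  | zero => simpa using Function.HasTemperateGrowth.const (1 : ℝ)
  | succ m ih => simpa [pow_succ] using htg_mul ih htg_id

end HermiteAux
section P2

namespace HermiteAux

abbrev Sc := SchwartzMap ℝ ℝ

def Xm (n : ℕ) : Sc →L[ℝ] Sc :=
  SchwartzMap.bilinLeftCLM (ContinuousLinearMap.mul ℝ ℝ).flip (htg_pow n)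

def Dm : Sc →L[ℝ] Sc := SchwartzMap.derivCLM ℝ ℝ

lemma Xm_apply (n : ℕ) (φ : Sc) (x : ℝ) : Xm n φ x = x ^ n * φ x := rfl

lemma Dm_apply (φ : Sc) (x : ℝ) : Dm φ x = deriv (⇑φ) x := rfl

lemma Dm_coe (φ : Sc) : ⇑(Dm φ) = deriv (⇑φ) := rfl

def Hm (φ : Sc) : Sc := Xm 2 φ - Dm (Dm φ)

lemma Hm_apply (φ : Sc) (x : ℝ) :
    Hm φ x = x ^ 2 * φ x - deriv (deriv (⇑φ)) x := by
  rw [Hm, SchwartzMap.sub_apply, Xm_apply]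
  rfl

lemma Hm_coe (φ : Sc) : ⇑(Hm φ) = hermiteOp1 (⇑φ) := by
  funext x
  rw [Hm_apply, hermiteOp1]
  ring

lemma Hm_iter_coe (k : ℕ) (φ : Sc) : ⇑(Hm^[k] φ) = hermiteOp1^[k] (⇑φ) := by
  induction k with
  | zero => rfl
  | succ n ih =>
      rw [Function.iterate_succ_apply', Function.iterate_succ_apply', Hm_coe, ih]

lemma hasDerivAt_coe (φ : Sc) (x : ℝ) : HasDerivAt (⇑φ) (Dm φ x) x := by
  rw [Dm_apply]
  exact φ.differentiableAt.hasDerivAt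

lemma hasDerivAt_Xm (n : ℕ) (φ : Sc) (x : ℝ) :
    HasDerivAt (⇑(Xm (n + 1) φ)) (((n : ℝ) + 1) * x ^ n * φ x + x ^ (n + 1) * Dm φ x) x := by
  have h : (⇑(Xm (n + 1) φ)) = fun y => y ^ (n + 1) * φ y := rfl
  rw [h]
  have := (hasDerivAt_pow (n + 1) x).mul (hasDerivAt_coe φ x)
  simpa [Pi.mul_def] using this

lemma Dm_Xm (n : ℕ) (φ : Sc) :
    Dm (Xm (n + 1) φ) = ((n : ℝ) + 1) • Xm n φ + Xm (n + 1) (Dm φ) := by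
  ext x
  rw [Dm_apply, (hasDerivAt_Xm n φ x).deriv, SchwartzMap.add_apply, SchwartzMap.smul_apply,
    Xm_apply, Xm_apply]
  simp [smul_eq_mul]
  ring

end HermiteAux

end P2
section P3

namespace HermiteAux

lemma int_mul (f g : Sc) : Integrable (fun x => f x * g x) volume := by
  refine (g.integrable (μ := volume)).bdd_mul f.continuous.aestronglyMeasurable
    (Eventually.of_forall fun x => norm_le_seminorm ℝ f x)

lemma tendsto_top (f : Sc) : Tendsto (⇑f) atTop (nhds 0) :=
  (zero_at_infty f).mono_left atTop_le_cocompact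

lemma tendsto_bot (f : Sc) : Tendsto (⇑f) atBot (nhds 0) :=
  (zero_at_infty f).mono_left atBot_le_cocompact

lemma integral_Dm_mul_add (f g : Sc) :
    ∫ x, (Dm f x * g x + f x * Dm g x) = 0 := by
  have hderiv : ∀ x : ℝ, HasDerivAt (fun y => f y * g y) (Dm f x * g x + f x * Dm g x) x :=
    fun x => (hasDerivAt_coe f x).mul (hasDerivAt_coe g x)
  have hint : Integrable (fun x => Dm f x * g x + f x * Dm g x) volume :=
    (int_mul (Dm f) g).add (int_mul f (Dm g))
  have htop : Tendsto (fun y => f y * g y) atTop (nhds 0) := by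
    simpa using (tendsto_top f).mul (tendsto_top g)
  have hbot : Tendsto (fun y => f y * g y) atBot (nhds 0) := by
    simpa using (tendsto_bot f).mul (tendsto_bot g)
  have h1 : ∫ x in Set.Iic (0 : ℝ), (Dm f x * g x + f x * Dm g x) = f 0 * g 0 - 0 :=
    integral_Iic_of_hasDerivAt_of_tendsto' (fun x _ => hderiv x) hint.integrableOn hbot
  have h2 : ∫ x in Set.Ioi (0 : ℝ), (Dm f x * g x + f x * Dm g x) = 0 - f 0 * g 0 :=
    integral_Ioi_of_hasDerivAt_of_tendsto' (fun x _ => hderiv x) hint.integrableOn htop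
  rw [← intervalIntegral.integral_Iic_add_Ioi hint.integrableOn hint.integrableOn, h1, h2]
  ring

lemma ibp (f g : Sc) : ∫ x, Dm f x * g x = - ∫ x, f x * Dm g x := by
  have h := integral_Dm_mul_add f g
  rw [integral_add (int_mul (Dm f) g) (int_mul f (Dm g))] at h
  linarith

/-- `2∫ x^{n+1} φ φ' = -(n+1) ∫ x^n φ²`. -/
lemma U1 (n : ℕ) (φ : Sc) :
    2 * ∫ x, Xm (n + 1) φ x * Dm φ x = -((n : ℝ) + 1) * ∫ x, Xm n φ x * φ x := by
  have h := ibp (Xm (n + 1) φ) φ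
  rw [Dm_Xm n φ] at h
  have hsplit : ∫ x, (((n : ℝ) + 1) • Xm n φ + Xm (n + 1) (Dm φ)) x * φ x
      = ((n : ℝ) + 1) * (∫ x, Xm n φ x * φ x) + ∫ x, Xm (n + 1) (Dm φ) x * φ x := by
    have : ∀ x : ℝ, (((n : ℝ) + 1) • Xm n φ + Xm (n + 1) (Dm φ)) x * φ x
        = ((n : ℝ) + 1) * (Xm n φ x * φ x) + Xm (n + 1) (Dm φ) x * φ x := by
      intro x
      rw [SchwartzMap.add_apply, SchwartzMap.smul_apply]
      simp [smul_eq_mul]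
      ring
    rw [integral_congr_ae (Eventually.of_forall this),
      integral_add ((int_mul (Xm n φ) φ).const_mul _) (int_mul (Xm (n + 1) (Dm φ)) φ),
      integral_const_mul]
  have hcomm : ∫ x, Xm (n + 1) (Dm φ) x * φ x = ∫ x, Xm (n + 1) φ x * Dm φ x := by
    refine integral_congr_ae (Eventually.of_forall fun x => ?_)
    simp only [Xm_apply, Dm_apply]
    ring
  rw [hsplit, hcomm] at h
  linarith

end HermiteAux

end P3
section P4

namespace HermiteAux

def Nn (f : Sc) : ℝ := ∫ x, (f x) ^ 2

lemma int_sq (f : Sc) : Integrable (fun x => (f x) ^ 2) volume := by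
  simpa only [← sq] using int_mul f f

lemma Nn_nonneg (f : Sc) : 0 ≤ Nn f := integral_nonneg fun x => sq_nonneg _

lemma Nn_eq_mul (f : Sc) : Nn f = ∫ x, f x * f x := by
  simp only [Nn, sq]

/-- positivity of the quadratic form: `∫ φ² ≤ ⟨Hφ, φ⟩`. -/
lemma posA (φ : Sc) : Nn φ ≤ ∫ x, Hm φ x * φ x := by
  have e1 : ∫ x, Hm φ x * φ x
      = (∫ x, Xm 2 φ x * φ x) + ∫ x, Dm φ x * Dm φ x := by
    have h : ∀ x : ℝ, Hm φ x * φ x = Xm 2 φ x * φ x - Dm (Dm φ) x * φ x := by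
      intro x
      rw [Hm, SchwartzMap.sub_apply]
      ring
    rw [integral_congr_ae (Eventually.of_forall h),
      integral_sub (int_mul (Xm 2 φ) φ) (int_mul (Dm (Dm φ)) φ), ibp (Dm φ) φ]
    ring
  have e2 : (0 : ℝ) ≤ ∫ x, (Dm φ x + Xm 1 φ x) ^ 2 := integral_nonneg fun x => sq_nonneg _
  have e3 : ∫ x, (Dm φ x + Xm 1 φ x) ^ 2
      = ((∫ x, Dm φ x * Dm φ x) + 2 * ∫ x, Xm 1 φ x * Dm φ x) + ∫ x, Xm 2 φ x * φ x := by
    have h : ∀ x : ℝ, (Dm φ x + Xm 1 φ x) ^ 2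
        = (Dm φ x * Dm φ x + 2 * (Xm 1 φ x * Dm φ x)) + Xm 2 φ x * φ x := by
      intro x
      simp only [Xm_apply]
      ring
    have i1 : Integrable (fun x => Dm φ x * Dm φ x + 2 * (Xm 1 φ x * Dm φ x)) volume :=
      (int_mul (Dm φ) (Dm φ)).add ((int_mul (Xm 1 φ) (Dm φ)).const_mul 2)
    have i2 : Integrable (fun x => 2 * (Xm 1 φ x * Dm φ x)) volume :=
      (int_mul (Xm 1 φ) (Dm φ)).const_mul 2
    rw [integral_congr_ae (Eventually.of_forall h),
      integral_add i1 (int_mul (Xm 2 φ) φ),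
      integral_add (int_mul (Dm φ) (Dm φ)) i2,
      integral_const_mul]
  have e4 : 2 * ∫ x, Xm 1 φ x * Dm φ x = -1 * ∫ x, Xm 0 φ x * φ x := by
    simpa using U1 0 φ
  have e5 : ∫ x, Xm 0 φ x * φ x = Nn φ := by
    rw [Nn_eq_mul]
    refine integral_congr_ae (Eventually.of_forall fun x => ?_)
    simp [Xm_apply]
  rw [e1]
  rw [e3, e4, e5] at e2
  linarith

lemma pairing_le (f g : Sc) : ∫ x, f x * g x ≤ Nn f / 2 + Nn g / 2 := by
  have h : ∫ x, f x * g x ≤ ∫ x, ((f x) ^ 2 / 2 + (g x) ^ 2 / 2) := by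
    refine integral_mono (int_mul f g) (((int_sq f).div_const 2).add ((int_sq g).div_const 2))
      fun x => ?_
    nlinarith [sq_nonneg (f x - g x)]
  rwa [integral_add ((int_sq f).div_const 2) ((int_sq g).div_const 2),
    integral_div, integral_div] at h

lemma monoH (φ : Sc) : Nn φ ≤ Nn (Hm φ) := by
  have h1 := posA φ
  have h2 := pairing_le (Hm φ) φ
  linarith

lemma iter_mono (j : ℕ) : ∀ φ : Sc, Nn φ ≤ Nn (Hm^[j] φ) := by
  induction j with
  | zero => exact fun φ => le_refl _
  | succ n ih =>
      intro φ
      calc Nn φ ≤ Nn (Hm φ) := monoH φ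
        _ ≤ Nn (Hm^[n] (Hm φ)) := ih (Hm φ)
        _ = Nn (Hm^[n + 1] φ) := by rw [Function.iterate_succ_apply]

lemma Nn_sub_expand (f g : Sc) :
    Nn (f - g) = Nn f - 2 * (∫ x, g x * f x) + Nn g := by
  have h : ∀ x : ℝ, ((f - g) x) ^ 2 = ((f x) ^ 2 - 2 * (g x * f x)) + (g x) ^ 2 := by
    intro x
    rw [SchwartzMap.sub_apply]
    ring
  have i1 : Integrable (fun x => (f x) ^ 2 - 2 * (g x * f x)) volume :=
    (int_sq f).sub ((int_mul g f).const_mul 2)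
  have i2 : Integrable (fun x => 2 * (g x * f x)) volume := (int_mul g f).const_mul 2
  rw [Nn, integral_congr_ae (Eventually.of_forall h),
    integral_add i1 (int_sq g),
    integral_sub (int_sq f) i2, integral_const_mul]
  rfl

/-- case `k = 1`: `‖x²φ‖² ≤ 3 ‖Hφ‖²`. -/
lemma B1 (φ : Sc) : Nn (Xm 2 φ) ≤ 3 * Nn (Hm φ) := by
  have key : ∫ x, Dm (Dm φ) x * Xm 2 φ x = Nn φ - Nn (Xm 1 (Dm φ)) := by
    have h1 := ibp (Dm φ) (Xm 2 φ)
    have h2 : Dm (Xm 2 φ) = ((1 : ℝ) + 1) • Xm 1 φ + Xm 2 (Dm φ) := by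
      have := Dm_Xm 1 φ
      norm_num at this ⊢
      exact this
    rw [h2] at h1
    have h3 : ∫ x, Dm φ x * (((1 : ℝ) + 1) • Xm 1 φ + Xm 2 (Dm φ)) x
        = 2 * (∫ x, Xm 1 φ x * Dm φ x) + Nn (Xm 1 (Dm φ)) := by
      have h : ∀ x : ℝ, Dm φ x * (((1 : ℝ) + 1) • Xm 1 φ + Xm 2 (Dm φ)) x
          = 2 * (Xm 1 φ x * Dm φ x) + (Xm 1 (Dm φ) x) ^ 2 := by
        intro x
        rw [SchwartzMap.add_apply, SchwartzMap.smul_apply]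
        simp only [Xm_apply, smul_eq_mul]
        ring
      rw [integral_congr_ae (Eventually.of_forall h),
        integral_add ((int_mul (Xm 1 φ) (Dm φ)).const_mul 2) (int_sq (Xm 1 (Dm φ))),
        integral_const_mul]
      rfl
    have e4 : 2 * ∫ x, Xm 1 φ x * Dm φ x = -1 * ∫ x, Xm 0 φ x * φ x := by
      simpa using U1 0 φ
    have e5 : ∫ x, Xm 0 φ x * φ x = Nn φ := by
      rw [Nn_eq_mul]
      refine integral_congr_ae (Eventually.of_forall fun x => ?_)
      simp [Xm_apply]
    rw [h3, e4, e5] at h1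
    linarith
  have expand : Nn (Hm φ) = Nn (Xm 2 φ) - 2 * (∫ x, Dm (Dm φ) x * Xm 2 φ x) + Nn (Dm (Dm φ)) :=
    Nn_sub_expand (Xm 2 φ) (Dm (Dm φ))
  have hm := monoH φ
  have h0 : 0 ≤ Nn (Dm (Dm φ)) := Nn_nonneg _
  have h1 : 0 ≤ Nn (Xm 1 (Dm φ)) := Nn_nonneg _
  rw [key] at expand
  linarith

end HermiteAux

end P4
section P5

namespace HermiteAux

lemma Nn_smul (r : ℝ) (f : Sc) : Nn (r • f) = r ^ 2 * Nn f := by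
  have h : ∀ x : ℝ, ((r • f) x) ^ 2 = r ^ 2 * (f x) ^ 2 := by
    intro x
    rw [SchwartzMap.smul_apply, smul_eq_mul]
    ring
  rw [Nn, integral_congr_ae (Eventually.of_forall h), integral_const_mul]
  rfl

lemma Nn_sub_sub_le (f g h : Sc) : Nn (f - g - h) ≤ 3 * (Nn f + Nn g + Nn h) := by
  have hpt : ∀ x : ℝ, ((f - g - h) x) ^ 2 ≤ 3 * ((f x) ^ 2 + (g x) ^ 2 + (h x) ^ 2) := by
    intro x
    rw [SchwartzMap.sub_apply, SchwartzMap.sub_apply]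
    nlinarith [sq_nonneg (f x + g x), sq_nonneg (f x + h x), sq_nonneg (g x - h x)]
  have i2 : Integrable (fun x => 3 * ((f x) ^ 2 + (g x) ^ 2 + (h x) ^ 2)) volume :=
    (((int_sq f).add (int_sq g)).add (int_sq h)).const_mul 3
  have := integral_mono (int_sq (f - g - h)) i2 hpt
  have i3 : Integrable (fun x => (f x) ^ 2 + (g x) ^ 2) volume := (int_sq f).add (int_sq g)
  rw [integral_const_mul, integral_add i3 (int_sq h), integral_add (int_sq f) (int_sq g)] at this
  exact this

/-- `∫ x^{2J+2} φ'² ≤ ⟨Hφ, x^{2J+2} φ⟩ + (J+1)(2J+1) ∫ x^{2J} φ²`. -/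
lemma derivWeight (J : ℕ) (φ : Sc) :
    Nn (Xm (J + 1) (Dm φ)) ≤ (∫ x, Hm φ x * Xm (2 * J + 2) φ x)
      + ((J : ℝ) + 1) * (2 * (J : ℝ) + 1) * Nn (Xm J φ) := by
  -- IBP on the second-derivative term
  have h1 := ibp (Dm φ) (Xm (2 * J + 2) φ)
  have h2 : Dm (Xm (2 * J + 2) φ)
      = ((2 * (J : ℝ) + 1) + 1) • Xm (2 * J + 1) φ + Xm (2 * J + 2) (Dm φ) := by
    have := Dm_Xm (2 * J + 1) φ
    push_cast at this ⊢
    exact this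
  rw [h2] at h1
  have h3 : ∫ x, Dm φ x * (((2 * (J : ℝ) + 1) + 1) • Xm (2 * J + 1) φ
        + Xm (2 * J + 2) (Dm φ)) x
      = (2 * (J : ℝ) + 2) * (∫ x, Xm (2 * J + 1) φ x * Dm φ x) + Nn (Xm (J + 1) (Dm φ)) := by
    have h : ∀ x : ℝ, Dm φ x * (((2 * (J : ℝ) + 1) + 1) • Xm (2 * J + 1) φ
          + Xm (2 * J + 2) (Dm φ)) x
        = (2 * (J : ℝ) + 2) * (Xm (2 * J + 1) φ x * Dm φ x) + (Xm (J + 1) (Dm φ) x) ^ 2 := by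
      intro x
      rw [SchwartzMap.add_apply, SchwartzMap.smul_apply]
      simp only [Xm_apply, smul_eq_mul]
      rw [show 2 * J + 2 = (J + 1) + (J + 1) by ring, pow_add]
      ring
    have i1 : Integrable (fun x => (2 * (J : ℝ) + 2) * (Xm (2 * J + 1) φ x * Dm φ x)) volume :=
      (int_mul (Xm (2 * J + 1) φ) (Dm φ)).const_mul _
    rw [integral_congr_ae (Eventually.of_forall h),
      integral_add i1 (int_sq (Xm (J + 1) (Dm φ))), integral_const_mul]
    rfl
  have h4 : 2 * ∫ x, Xm (2 * J + 1) φ x * Dm φ x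
      = -((2 * (J : ℝ)) + 1) * ∫ x, Xm (2 * J) φ x * φ x := by
    have := U1 (2 * J) φ
    push_cast at this ⊢
    exact this
  have h5 : ∫ x, Xm (2 * J) φ x * φ x = Nn (Xm J φ) := by
    rw [Nn]
    refine integral_congr_ae (Eventually.of_forall fun x => ?_)
    simp only [Xm_apply]
    rw [show 2 * J = J + J by ring, pow_add]
    ring
  -- the pairing with Hm
  have h6 : ∫ x, Hm φ x * Xm (2 * J + 2) φ x
      = Nn (Xm (J + 2) φ) - ∫ x, Dm (Dm φ) x * Xm (2 * J + 2) φ x := by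
    have h : ∀ x : ℝ, Hm φ x * Xm (2 * J + 2) φ x
        = (Xm (J + 2) φ x) ^ 2 - Dm (Dm φ) x * Xm (2 * J + 2) φ x := by
      intro x
      rw [Hm, SchwartzMap.sub_apply]
      simp only [Xm_apply]
      have hx : x ^ (2 : ℕ) * x ^ (2 * J + 2) = x ^ (J + 2) * x ^ (J + 2) := by
        rw [← pow_add, ← pow_add]
        congr 1
        ring
      linear_combination (φ x * φ x) * hx
    rw [integral_congr_ae (Eventually.of_forall h),
      integral_sub (int_sq (Xm (J + 2) φ)) (int_mul (Dm (Dm φ)) (Xm (2 * J + 2) φ))]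
    rfl
  have hN2 : 0 ≤ Nn (Xm (J + 2) φ) := Nn_nonneg _
  rw [h3] at h1
  rw [h5] at h4
  have hI : ∫ x, Xm (2 * J + 1) φ x * Dm φ x = -(2 * (J : ℝ) + 1) * Nn (Xm J φ) / 2 := by
    linarith
  rw [hI] at h1
  rw [h1] at h6
  ring_nf at h6 hN2 ⊢
  linarith [hN2, h6]

/-- splitting of `H(x^{M+2} φ)`. -/
lemma Hsplit (M : ℕ) (φ : Sc) :
    Hm (Xm (M + 2) φ) = Xm (M + 2) (Hm φ)
      - (((M : ℝ) + 2) * ((M : ℝ) + 1)) • Xm M φ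
      - (2 * ((M : ℝ) + 2)) • Xm (M + 1) (Dm φ) := by
  have d1 : Dm (Xm (M + 2) φ) = (((M : ℝ) + 1) + 1) • Xm (M + 1) φ + Xm (M + 2) (Dm φ) := by
    have := Dm_Xm (M + 1) φ
    push_cast at this ⊢
    exact this
  have d2 : Dm (Dm (Xm (M + 2) φ))
      = (((M : ℝ) + 1) + 1) • (((M : ℝ) + 1) • Xm M φ + Xm (M + 1) (Dm φ))
        + ((((M : ℝ) + 1) + 1) • Xm (M + 1) (Dm φ) + Xm (M + 2) (Dm (Dm φ))) := by
    rw [d1, map_add, _root_.map_smul, Dm_Xm M φ, Dm_Xm (M + 1) (Dm φ)]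
    push_cast
    rfl
  have comm : Xm 2 (Xm (M + 2) φ) = Xm (M + 2) (Xm 2 φ) := by
    ext x
    simp only [Xm_apply]
    ring
  have hH : Hm (Xm (M + 2) φ) = Xm 2 (Xm (M + 2) φ) - Dm (Dm (Xm (M + 2) φ)) := rfl
  have hH2 : Xm (M + 2) (Hm φ) = Xm (M + 2) (Xm 2 φ) - Xm (M + 2) (Dm (Dm φ)) := by
    rw [Hm, map_sub]
  rw [hH, d2, comm, hH2]
  ext x
  simp only [SchwartzMap.sub_apply, SchwartzMap.add_apply, SchwartzMap.smul_apply, smul_eq_mul]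
  ring

end HermiteAux

end P5
section P6

namespace HermiteAux

def SProp (k : ℕ) : Prop :=
  ∃ c : ℝ, 0 < c ∧ ∀ φ : Sc, Nn (Xm (2 * k) φ) ≤ c * Nn (Hm^[k] φ)

lemma Nn_X0 (φ : Sc) : Nn (Xm 0 φ) = Nn φ := by
  refine integral_congr_ae (Eventually.of_forall fun x => ?_)
  simp [Xm_apply]

lemma Nn_X2X (n : ℕ) (φ : Sc) : Nn (Xm 2 (Xm n φ)) = Nn (Xm (n + 2) φ) := by
  refine integral_congr_ae (Eventually.of_forall fun x => ?_)
  simp only [Xm_apply]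
  rw [pow_add]
  ring

lemma sprop_zero : SProp 0 := by
  refine ⟨1, one_pos, fun φ => ?_⟩
  rw [Nn_X0]
  simp

lemma sprop_one : SProp 1 := by
  refine ⟨3, by norm_num, fun φ => ?_⟩
  simpa using B1 φ

lemma stepB {K : ℕ} {c1 c0 : ℝ} (hc1 : 0 < c1) (hc0 : 0 < c0)
    (hS1 : ∀ φ : Sc, Nn (Xm (2 * (K + 1)) φ) ≤ c1 * Nn (Hm^[K + 1] φ))
    (hS0 : ∀ φ : Sc, Nn (Xm (2 * K) φ) ≤ c0 * Nn (Hm^[K] φ)) :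
    ∃ d : ℝ, 0 < d ∧ ∀ φ : Sc, Nn (Hm (Xm (2 * K + 2) φ)) ≤ d * Nn (Hm^[K + 2] φ) := by
  set a : ℝ := ((2 * K : ℝ) + 2) * ((2 * K : ℝ) + 1) with ha
  set b : ℝ := 2 * ((2 * K : ℝ) + 2) with hb
  set e : ℝ := ((2 * K : ℝ) + 1) * (2 * (2 * K : ℝ) + 1) with he
  have he0 : (0 : ℝ) ≤ e := by positivity
  have hd2 : 0 < c1 / 2 + c0 / 2 + e * c0 := by nlinarith [mul_nonneg he0 hc0.le]
  refine ⟨3 * (c1 + a ^ 2 * c0 + b ^ 2 * (c1 / 2 + c0 / 2 + e * c0)),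
    by nlinarith [mul_nonneg (sq_nonneg a) hc0.le, mul_nonneg (sq_nonneg b) hd2.le], fun φ => ?_⟩
  set E : ℝ := Nn (Hm^[K + 2] φ) with hE
  -- T1
  have hT1 : Nn (Xm (2 * K + 2) (Hm φ)) ≤ c1 * E := by
    have h := hS1 (Hm φ)
    rw [show 2 * (K + 1) = 2 * K + 2 by ring] at h
    rw [hE, show K + 2 = (K + 1) + 1 by ring, Function.iterate_succ_apply]
    exact h
  -- T2
  have hT2 : Nn (Xm (2 * K) φ) ≤ c0 * E := by
    have h := hS0 φ
    have h2 : Nn (Hm^[K] φ) ≤ E := by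
      rw [hE, show K + 2 = 2 + K by ring, Function.iterate_add_apply]
      exact iter_mono 2 _
    nlinarith
  -- T3
  have hT3 : Nn (Xm (2 * K + 1) (Dm φ)) ≤ c1 * E / 2 + c0 * E / 2 + e * (c0 * E) := by
    have h := derivWeight (2 * K) φ
    have hpair : ∫ x, Hm φ x * Xm (2 * (2 * K) + 2) φ x
        ≤ Nn (Xm (2 * K + 2) (Hm φ)) / 2 + Nn (Xm (2 * K) φ) / 2 := by
      have hco : ∫ x, Hm φ x * Xm (2 * (2 * K) + 2) φ x
          = ∫ x, Xm (2 * K + 2) (Hm φ) x * Xm (2 * K) φ x := by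
        refine integral_congr_ae (Eventually.of_forall fun x => ?_)
        simp only [Xm_apply]
        rw [show 2 * (2 * K) + 2 = (2 * K + 2) + 2 * K by ring, pow_add]
        ring
      rw [hco]
      exact pairing_le _ _
    have hee : e * Nn (Xm (2 * K) φ) ≤ e * (c0 * E) :=
      mul_le_mul_of_nonneg_left hT2 he0
    have hcast : ((2 * K : ℕ) : ℝ) = 2 * (K : ℝ) := by push_cast; ring
    rw [hcast] at h
    have : (2 * (K : ℝ) + 1) * (2 * (2 * (K : ℝ)) + 1) = e := by rw [he]
    rw [this] at h
    linarith
  -- combine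
  have hsplit := Hsplit (2 * K) φ
  have hcast2 : ((2 * K : ℕ) : ℝ) = 2 * (K : ℝ) := by push_cast; ring
  rw [hcast2] at hsplit
  rw [← ha, ← hb] at hsplit
  have hle : Nn (Hm (Xm (2 * K + 2) φ))
      ≤ 3 * (Nn (Xm (2 * K + 2) (Hm φ)) + a ^ 2 * Nn (Xm (2 * K) φ)
          + b ^ 2 * Nn (Xm (2 * K + 1) (Dm φ))) := by
    rw [hsplit]
    calc Nn (Xm (2 * K + 2) (Hm φ) - a • Xm (2 * K) φ - b • Xm (2 * K + 1) (Dm φ))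
        ≤ 3 * (Nn (Xm (2 * K + 2) (Hm φ)) + Nn (a • Xm (2 * K) φ)
            + Nn (b • Xm (2 * K + 1) (Dm φ))) := Nn_sub_sub_le _ _ _
      _ = 3 * (Nn (Xm (2 * K + 2) (Hm φ)) + a ^ 2 * Nn (Xm (2 * K) φ)
            + b ^ 2 * Nn (Xm (2 * K + 1) (Dm φ))) := by rw [Nn_smul, Nn_smul]
  have m2 : a ^ 2 * Nn (Xm (2 * K) φ) ≤ a ^ 2 * (c0 * E) :=
    mul_le_mul_of_nonneg_left hT2 (sq_nonneg a)
  have m3 : b ^ 2 * Nn (Xm (2 * K + 1) (Dm φ)) ≤ b ^ 2 * (c1 * E / 2 + c0 * E / 2 + e * (c0 * E)) :=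
    mul_le_mul_of_nonneg_left hT3 (sq_nonneg b)
  linarith [hT1, m2, m3, hle]

lemma sprop_all : ∀ k : ℕ, SProp k ∧ SProp (k + 1) := by
  intro k
  induction k with
  | zero => exact ⟨sprop_zero, sprop_one⟩
  | succ K ih =>
      refine ⟨ih.2, ?_⟩
      obtain ⟨c0, hc0, hS0⟩ := ih.1
      obtain ⟨c1, hc1, hS1⟩ := ih.2
      obtain ⟨d, hd, hB⟩ := stepB hc1 hc0 hS1 hS0
      refine ⟨3 * d, by positivity, fun φ => ?_⟩
      have h1 : Nn (Xm (2 * (K + 2)) φ) = Nn (Xm 2 (Xm (2 * K + 2) φ)) := by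
        rw [Nn_X2X, show 2 * K + 2 + 2 = 2 * (K + 2) by ring]
      have h2 := B1 (Xm (2 * K + 2) φ)
      have h3 := hB φ
      rw [h1]
      calc Nn (Xm 2 (Xm (2 * K + 2) φ)) ≤ 3 * Nn (Hm (Xm (2 * K + 2) φ)) := h2
        _ ≤ 3 * (d * Nn (Hm^[K + 2] φ)) := by linarith
        _ = 3 * d * Nn (Hm^[K + 2] φ) := by ring

lemma sprop (k : ℕ) : SProp k := (sprop_all k).1

end HermiteAux

end P6
section P7

namespace HermiteAux

lemma key_lift (f g : Sc) (c : ℝ) (hc : 0 < c) (h : Nn f ≤ c * Nn g) :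
    (∫⁻ x, ENNReal.ofReal ((f x) ^ 2) ∂volume) ^ (1 / 2 : ℝ)
      ≤ ENNReal.ofReal (Real.sqrt c) *
        (∫⁻ x, ENNReal.ofReal ((g x) ^ 2) ∂volume) ^ (1 / 2 : ℝ) := by
  rw [← ofReal_integral_eq_lintegral_ofReal (int_sq f) (Eventually.of_forall fun x => sq_nonneg _),
    ← ofReal_integral_eq_lintegral_ofReal (int_sq g) (Eventually.of_forall fun x => sq_nonneg _)]
  have h2 : ENNReal.ofReal (Nn f) ≤ ENNReal.ofReal (c * Nn g) := ENNReal.ofReal_le_ofReal h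
  calc (ENNReal.ofReal (Nn f)) ^ (1 / 2 : ℝ)
      ≤ (ENNReal.ofReal (c * Nn g)) ^ (1 / 2 : ℝ) := ENNReal.rpow_le_rpow h2 (by norm_num)
    _ = (ENNReal.ofReal c * ENNReal.ofReal (Nn g)) ^ (1 / 2 : ℝ) := by
        rw [ENNReal.ofReal_mul hc.le]
    _ = (ENNReal.ofReal c) ^ (1 / 2 : ℝ) * (ENNReal.ofReal (Nn g)) ^ (1 / 2 : ℝ) :=
        ENNReal.mul_rpow_of_nonneg _ _ (by norm_num)
    _ = ENNReal.ofReal (Real.sqrt c) * (ENNReal.ofReal (Nn g)) ^ (1 / 2 : ℝ) := by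
        congr 1
        rw [ENNReal.ofReal_rpow_of_pos hc, ← Real.sqrt_eq_rpow]

end HermiteAux

end P7

open HermiteAux
/-- `‖x^{2k}φ‖₂ ≤ C_k ‖H^k φ‖₂` and `‖H(x^{2(k-1)}φ)‖₂ ≤ D_k ‖H^k φ‖₂`
for Schwartz functions `φ` on `ℝ`. -/
theorem weighted_power_le_hermiteOp1_pow (k : ℕ) (hk : 1 ≤ k) :
    ∃ C D : ℝ, 0 < C ∧ 0 < D ∧
      ∀ φ : SchwartzMap ℝ ℝ,
        ((∫⁻ x, ENNReal.ofReal ((x ^ (2 * k) * φ x) ^ 2) ∂volume) ^ (1 / 2 : ℝ)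
            ≤ ENNReal.ofReal C *
              (∫⁻ x, ENNReal.ofReal ((hermiteOp1^[k] (⇑φ) x) ^ 2) ∂volume) ^ (1 / 2 : ℝ)) ∧
        ((∫⁻ x, ENNReal.ofReal
                ((hermiteOp1 (fun y => y ^ (2 * (k - 1)) * φ y) x) ^ 2) ∂volume) ^ (1 / 2 : ℝ)
            ≤ ENNReal.ofReal D *
              (∫⁻ x, ENNReal.ofReal ((hermiteOp1^[k] (⇑φ) x) ^ 2) ∂volume) ^ (1 / 2 : ℝ)) := by
  obtain ⟨c, hc, hS⟩ := sprop k
  obtain ⟨d, hd, hB⟩ : ∃ d : ℝ, 0 < d ∧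
      ∀ φ : Sc, Nn (Hm (Xm (2 * (k - 1)) φ)) ≤ d * Nn (Hm^[k] φ) := by
    match k, hk with
    | 1, _ =>
        refine ⟨1, one_pos, fun φ => ?_⟩
        have hX0 : Xm (2 * (1 - 1)) φ = φ := by
          ext x
          simp [Xm_apply]
        rw [hX0]
        simp
    | (K + 2), _ =>
        obtain ⟨c1, hc1, hS1⟩ := sprop (K + 1)
        obtain ⟨c0, hc0, hS0⟩ := sprop K
        obtain ⟨d, hd, hB⟩ := stepB hc1 hc0 hS1 hS0
        refine ⟨d, hd, fun φ => ?_⟩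
        have h := hB φ
        rw [show 2 * (K + 2 - 1) = 2 * K + 2 by omega]
        exact h
  refine ⟨Real.sqrt c, Real.sqrt d, Real.sqrt_pos.mpr hc, Real.sqrt_pos.mpr hd, fun φ => ⟨?_, ?_⟩⟩
  · have g1 : ∫⁻ x, ENNReal.ofReal ((x ^ (2 * k) * φ x) ^ 2) ∂volume
        = ∫⁻ x, ENNReal.ofReal ((Xm (2 * k) φ x) ^ 2) ∂volume := rfl
    have g2 : ∫⁻ x, ENNReal.ofReal ((hermiteOp1^[k] (⇑φ) x) ^ 2) ∂volume
        = ∫⁻ x, ENNReal.ofReal ((Hm^[k] φ x) ^ 2) ∂volume := by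
      rw [← Hm_iter_coe]
    rw [g1, g2]
    exact key_lift _ _ c hc (hS φ)
  · have g3 : (fun y : ℝ => y ^ (2 * (k - 1)) * φ y) = ⇑(Xm (2 * (k - 1)) φ) := rfl
    have g2 : ∫⁻ x, ENNReal.ofReal ((hermiteOp1^[k] (⇑φ) x) ^ 2) ∂volume
        = ∫⁻ x, ENNReal.ofReal ((Hm^[k] φ x) ^ 2) ∂volume := by
      rw [← Hm_iter_coe]
    rw [g3, ← Hm_coe, g2]
    exact key_lift _ _ d hd (hB φ)
end
end

section
/- There is a constant $C>0$ such that for every $M\ge1$ and every integer $k\ge1$, $\int_{-M}^{M}h_k(t)^2\,dt\le C\,M\,k^{-1/2}$, where $h_k$ is the $k$-th Hermite function. -/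
open MeasureTheory Polynomial Real Filter

noncomputable section

/-- The `k`-th (physicists') Hermite function on `ℝ`. -/
def hermiteFun (k : ℕ) (t : ℝ) : ℝ :=
  (Real.sqrt (2 ^ k * Nat.factorial k * Real.sqrt Real.pi))⁻¹ *
    ((-1 : ℝ) ^ k * Real.exp (t ^ 2) *
      iteratedDeriv k (fun s : ℝ => Real.exp (-(s ^ 2))) t) * Real.exp (-(t ^ 2) / 2)

lemma derivative_hermite' (n : ℕ) :
    derivative (hermite (n + 1)) = C ((n : ℤ) + 1) * hermite n := by
  induction n with
  | zero => simp [hermite_one]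
  | succ n ih =>
    rw [hermite_succ (n+1)]
    rw [derivative_sub, derivative_mul, derivative_X, ih]
    rw [hermite_succ n]
    push_cast
    ring_nf
    simp [derivative_mul, ih]
    ring

-- helper: HasDerivAt for s ↦ aeval (√2 s) p
lemma hasDerivAt_aeval_sqrt2 (p : Polynomial ℤ) (t : ℝ) :
    HasDerivAt (fun s : ℝ => aeval (Real.sqrt 2 * s) p)
      (Real.sqrt 2 * aeval (Real.sqrt 2 * t) (derivative p)) t := by
  have h1 : HasDerivAt (fun s : ℝ => Real.sqrt 2 * s) (Real.sqrt 2) t := by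
    simpa using (hasDerivAt_id t).const_mul (Real.sqrt 2)
  have h2 := (Polynomial.hasDerivAt_aeval (q := p) (Real.sqrt 2 * t))
  have h3 := h2.comp t h1
  simp only [Function.comp_def] at h3
  rw [mul_comm] at h3
  exact h3

lemma iteratedDeriv_gauss (k : ℕ) (t : ℝ) :
    iteratedDeriv k (fun s : ℝ => Real.exp (-(s ^ 2))) t =
      (-Real.sqrt 2) ^ k * aeval (Real.sqrt 2 * t) (hermite k) * Real.exp (-(t ^ 2)) := by
  induction k generalizing t with
  | zero => simp
  | succ k ih =>
    rw [iteratedDeriv_succ]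
    have hfun : iteratedDeriv k (fun s : ℝ => Real.exp (-(s ^ 2))) =
        fun t => (-Real.sqrt 2) ^ k * aeval (Real.sqrt 2 * t) (hermite k) * Real.exp (-(t ^ 2)) :=
      funext ih
    rw [hfun]
    have hexp : HasDerivAt (fun s : ℝ => Real.exp (-(s ^ 2))) ((-(2*t)) * Real.exp (-(t ^ 2))) t := by
      have := ((hasDerivAt_pow 2 t).neg).exp
      simpa [mul_comm] using this
    have hP := hasDerivAt_aeval_sqrt2 (hermite k) t
    have h := ((hP.const_mul ((-Real.sqrt 2) ^ k)).fun_mul hexp)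
    rw [h.deriv]
    rw [hermite_succ, map_sub, map_mul, aeval_X]
    have h2 : Real.sqrt 2 ^ 2 = 2 := Real.sq_sqrt (by norm_num)
    rw [pow_succ]
    ring_nf
    rw [Real.sq_sqrt (by norm_num : (0:ℝ) ≤ 2)]
    ring


lemma derivative_hermite_eq (n : ℕ) :
    derivative (hermite n) = X * hermite n - hermite (n + 1) := by
  rw [hermite_succ]; ring

lemma hermiteFun_eq (k : ℕ) (t : ℝ) :
    hermiteFun k t = (Real.sqrt (Nat.factorial k * Real.sqrt Real.pi))⁻¹ *
      aeval (Real.sqrt 2 * t) (hermite k) * Real.exp (-(t ^ 2) / 2) := by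
  rw [hermiteFun, iteratedDeriv_gauss]
  have h1 : Real.sqrt ((2:ℝ) ^ k * Nat.factorial k * Real.sqrt Real.pi) =
      Real.sqrt 2 ^ k * Real.sqrt (Nat.factorial k * Real.sqrt Real.pi) := by
    rw [mul_assoc, Real.sqrt_mul (by positivity)]
    congr 1
    rw [show ((2:ℝ)^k) = (Real.sqrt 2 ^ k)^2 by
      rw [← pow_mul, mul_comm, pow_mul, Real.sq_sqrt (by norm_num)]]
    exact Real.sqrt_sq (by positivity)
  rw [h1, mul_inv]
  have h2 : ((-1:ℝ)) ^ k * Real.exp (t ^ 2) *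
      ((-Real.sqrt 2) ^ k * aeval (Real.sqrt 2 * t) (hermite k) * Real.exp (-(t ^ 2))) =
      Real.sqrt 2 ^ k * aeval (Real.sqrt 2 * t) (hermite k) := by
    have : Real.exp (t^2) * Real.exp (-(t^2)) = 1 := by
      rw [← Real.exp_add]; simp
    calc ((-1:ℝ)) ^ k * Real.exp (t ^ 2) *
        ((-Real.sqrt 2) ^ k * aeval (Real.sqrt 2 * t) (hermite k) * Real.exp (-(t ^ 2)))
        = ((-1:ℝ) * -Real.sqrt 2) ^ k * aeval (Real.sqrt 2 * t) (hermite k) *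
          (Real.exp (t^2) * Real.exp (-(t^2))) := by rw [mul_pow]; ring
      _ = Real.sqrt 2 ^ k * aeval (Real.sqrt 2 * t) (hermite k) := by rw [this]; ring_nf
  rw [h2]
  have h3 : (Real.sqrt 2 ^ k : ℝ) ≠ 0 := by positivity
  field_simp

end

noncomputable section
def hw (k : ℕ) (t : ℝ) : ℝ :=
  (Real.sqrt (Nat.factorial k * Real.sqrt Real.pi))⁻¹ *
    (t * aeval (Real.sqrt 2 * t) (hermite k) -
      Real.sqrt 2 * aeval (Real.sqrt 2 * t) (hermite (k + 1))) * Real.exp (-(t ^ 2) / 2)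

lemma hasDerivAt_exp2 (t : ℝ) :
    HasDerivAt (fun s : ℝ => Real.exp (-(s ^ 2) / 2)) (-t * Real.exp (-(t ^ 2) / 2)) t := by
  have h := (((hasDerivAt_pow 2 t).fun_neg).div_const 2).exp
  convert h using 1
  simp
  ring

lemma hasDerivAt_hermiteFun (k : ℕ) (t : ℝ) :
    HasDerivAt (hermiteFun k) (hw k t) t := by
  have hfe : hermiteFun k = fun s => (Real.sqrt (Nat.factorial k * Real.sqrt Real.pi))⁻¹ *
      aeval (Real.sqrt 2 * s) (hermite k) * Real.exp (-(s ^ 2) / 2) :=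
    funext (hermiteFun_eq k)
  rw [hfe]
  have h := (((hasDerivAt_aeval_sqrt2 (hermite k) t).const_mul
      ((Real.sqrt (Nat.factorial k * Real.sqrt Real.pi))⁻¹)).fun_mul (hasDerivAt_exp2 t))
  refine h.congr_deriv (Eq.symm ?_)
  rw [hw, derivative_hermite_eq, map_sub, map_mul, aeval_X]
  ring_nf
  rw [Real.sq_sqrt (by norm_num : (0:ℝ) ≤ 2)]
  ring

lemma hasDerivAt_hw (k : ℕ) (t : ℝ) :
    HasDerivAt (hw k) ((t ^ 2 - (2 * (k:ℝ) + 1)) * hermiteFun k t) t := by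
  have hinner : HasDerivAt (fun s : ℝ => s * aeval (Real.sqrt 2 * s) (hermite k) -
      Real.sqrt 2 * aeval (Real.sqrt 2 * s) (hermite (k + 1)))
      (1 * aeval (Real.sqrt 2 * t) (hermite k) +
        t * (Real.sqrt 2 * aeval (Real.sqrt 2 * t) (derivative (hermite k))) -
        Real.sqrt 2 * (Real.sqrt 2 * aeval (Real.sqrt 2 * t) (derivative (hermite (k + 1))))) t := by
    exact ((hasDerivAt_id t).mul (hasDerivAt_aeval_sqrt2 (hermite k) t)).sub
      ((hasDerivAt_aeval_sqrt2 (hermite (k + 1)) t).const_mul (Real.sqrt 2))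
  have h := ((hinner.const_mul ((Real.sqrt (Nat.factorial k * Real.sqrt Real.pi))⁻¹)).fun_mul
      (hasDerivAt_exp2 t))
  have hfun : (fun s : ℝ => (Real.sqrt (Nat.factorial k * Real.sqrt Real.pi))⁻¹ *
      (s * aeval (Real.sqrt 2 * s) (hermite k) -
        Real.sqrt 2 * aeval (Real.sqrt 2 * s) (hermite (k + 1))) * Real.exp (-(s ^ 2) / 2)) =
      hw k := rfl
  rw [hfun] at h
  refine h.congr_deriv (Eq.symm ?_)
  rw [hermiteFun_eq]
  have e1 : aeval (Real.sqrt 2 * t) (derivative (hermite k)) =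
      Real.sqrt 2 * t * aeval (Real.sqrt 2 * t) (hermite k) -
        aeval (Real.sqrt 2 * t) (hermite (k + 1)) := by
    rw [derivative_hermite_eq, map_sub, map_mul, aeval_X]
  have e2 : aeval (Real.sqrt 2 * t) (derivative (hermite (k + 1))) =
      ((k : ℝ) + 1) * aeval (Real.sqrt 2 * t) (hermite k) := by
    rw [derivative_hermite', map_mul, aeval_C]
    push_cast
    ring
  rw [e1, e2]
  ring_nf
  rw [Real.sq_sqrt (by norm_num : (0:ℝ) ≤ 2)]
  ring
end

noncomputable section
def hE (k : ℕ) (t : ℝ) : ℝ :=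
  (hw k t) ^ 2 + (2 * (k : ℝ) + 1 - t ^ 2) * (hermiteFun k t) ^ 2

lemma hasDerivAt_hE (k : ℕ) (t : ℝ) :
    HasDerivAt (hE k) (-2 * t * (hermiteFun k t) ^ 2) t := by
  have h1 := hasDerivAt_hermiteFun k t
  have h2 := hasDerivAt_hw k t
  have h3 := h2.pow 2
  have h5 := h1.pow 2
  have h4 : HasDerivAt (fun s : ℝ => 2 * (k : ℝ) + 1 - s ^ 2) (-(2 * t)) t := by
    simpa using (hasDerivAt_pow 2 t).const_sub (2 * (k : ℝ) + 1)
  have h := h3.add (h4.mul h5)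
  refine h.congr_deriv (Eq.symm ?_)
  simp only [Nat.cast_ofNat, pow_one, Pi.pow_apply]
  ring

lemma continuous_hermiteFun (k : ℕ) : Continuous (hermiteFun k) :=
  continuous_iff_continuousAt.2 fun t => (hasDerivAt_hermiteFun k t).differentiableAt.continuousAt

lemma continuous_hw (k : ℕ) : Continuous (hw k) :=
  continuous_iff_continuousAt.2 fun t => (hasDerivAt_hw k t).differentiableAt.continuousAt

lemma continuous_hE (k : ℕ) : Continuous (hE k) :=
  continuous_iff_continuousAt.2 fun t => (hasDerivAt_hE k t).differentiableAt.continuousAt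

lemma hE_antitoneOn (k : ℕ) : AntitoneOn (hE k) (Set.Ici 0) := by
  apply antitoneOn_of_deriv_nonpos (convex_Ici 0) (continuous_hE k).continuousOn
  · intro x _
    exact (hasDerivAt_hE k x).differentiableAt.differentiableWithinAt
  · intro x hx
    rw [interior_Ici] at hx
    rw [(hasDerivAt_hE k x).deriv]
    have : (0:ℝ) < x := hx
    nlinarith [sq_nonneg (hermiteFun k x)]

lemma hE_monotoneOn (k : ℕ) : MonotoneOn (hE k) (Set.Iic 0) := by
  apply monotoneOn_of_deriv_nonneg (convex_Iic 0) (continuous_hE k).continuousOn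
  · intro x _
    exact (hasDerivAt_hE k x).differentiableAt.differentiableWithinAt
  · intro x hx
    rw [interior_Iic] at hx
    rw [(hasDerivAt_hE k x).deriv]
    have : x < (0:ℝ) := hx
    nlinarith [sq_nonneg (hermiteFun k x)]

lemma hE_le_hE_zero (k : ℕ) (t : ℝ) : hE k t ≤ hE k 0 := by
  rcases le_total t 0 with h | h
  · exact hE_monotoneOn k h Set.self_mem_Iic h
  · exact hE_antitoneOn k Set.self_mem_Ici h h
end

noncomputable section
lemma tendsto_poly_gauss (p : Polynomial ℝ) :
    Tendsto (fun t : ℝ => eval t p * Real.exp (-(t ^ 2))) atTop (nhds 0) := by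
  rw [tendsto_zero_iff_abs_tendsto_zero]
  apply squeeze_zero' (Filter.Eventually.of_forall fun t => abs_nonneg _)
  · filter_upwards [eventually_ge_atTop (1:ℝ)] with t ht
    show |eval t p * Real.exp (-(t ^ 2))| ≤ |eval t p / Real.exp t|
    rw [abs_mul, abs_div]
    rw [abs_of_pos (Real.exp_pos _), abs_of_pos (Real.exp_pos _), div_eq_mul_inv,
      ← Real.exp_neg]
    apply mul_le_mul_of_nonneg_left _ (abs_nonneg _)
    apply Real.exp_le_exp.2
    nlinarith
  · simpa using (Polynomial.tendsto_div_exp_atTop p).abs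

def hQ (k : ℕ) : Polynomial ℝ :=
  C (((Real.sqrt (Nat.factorial k * Real.sqrt Real.pi))⁻¹) ^ 2) *
    ((X * ((hermite k).map (Int.castRingHom ℝ)).comp (C (Real.sqrt 2) * X) -
        C (Real.sqrt 2) * ((hermite (k + 1)).map (Int.castRingHom ℝ)).comp (C (Real.sqrt 2) * X)) ^ 2 +
      (C (2 * (k : ℝ) + 1) - X ^ 2) *
        (((hermite k).map (Int.castRingHom ℝ)).comp (C (Real.sqrt 2) * X)) ^ 2)

lemma hE_eq_poly (k : ℕ) (t : ℝ) : hE k t = eval t (hQ k) * Real.exp (-(t ^ 2)) := by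
  have hA : ∀ n : ℕ, eval t (((hermite n).map (Int.castRingHom ℝ)).comp (C (Real.sqrt 2) * X)) =
      aeval (Real.sqrt 2 * t) (hermite n) := by
    intro n
    rw [eval_comp, eval_mul, eval_C, eval_X, aeval_def, eval₂_eq_eval_map]
    rfl
  have hg : Real.exp (-(t ^ 2) / 2) * Real.exp (-(t ^ 2) / 2) = Real.exp (-(t ^ 2)) := by
    rw [← Real.exp_add]; ring_nf
  rw [hE, hw, hermiteFun_eq, hQ]
  simp only [eval_mul, eval_add, eval_sub, eval_pow, eval_C, eval_X, hA]
  rw [← hg]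
  ring

lemma tendsto_hE_atTop (k : ℕ) : Tendsto (hE k) atTop (nhds 0) := by
  have := tendsto_poly_gauss (hQ k)
  apply this.congr
  intro t
  rw [hE_eq_poly]

lemma tendsto_hE_atBot (k : ℕ) : Tendsto (hE k) atBot (nhds 0) := by
  have h := (tendsto_poly_gauss ((hQ k).comp (-X))).comp tendsto_neg_atBot_atTop
  apply h.congr
  intro t
  show eval (-t) ((hQ k).comp (-X)) * Real.exp (-(-t) ^ 2) = hE k t
  rw [eval_comp, eval_neg, eval_X, neg_neg, hE_eq_poly]
  ring_nf

lemma hE_nonneg (k : ℕ) (t : ℝ) : 0 ≤ hE k t := by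
  rcases le_total 0 t with h | h
  · apply le_of_tendsto (tendsto_hE_atTop k)
    filter_upwards [eventually_ge_atTop t] with s hs
    exact hE_antitoneOn k h (le_trans h hs) hs
  · apply le_of_tendsto (tendsto_hE_atBot k)
    filter_upwards [eventually_le_atBot t] with s hs
    exact hE_monotoneOn k (le_trans hs h) h hs
end

noncomputable section
open scoped Nat

lemma key_sqrt_ineq (m : ℕ) :
    (2 * (m:ℝ) + 1) * Real.sqrt ((m:ℝ) + 2) ≤ (2 * (m:ℝ) + 2) * Real.sqrt ((m:ℝ) + 1) := by
  have h1 : ((2 * (m:ℝ) + 1) * Real.sqrt ((m:ℝ) + 2)) ^ 2 ≤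
      ((2 * (m:ℝ) + 2) * Real.sqrt ((m:ℝ) + 1)) ^ 2 := by
    rw [mul_pow, mul_pow, Real.sq_sqrt (by positivity), Real.sq_sqrt (by positivity)]
    nlinarith [sq_nonneg (m:ℝ)]
  have h2 : 0 ≤ (2 * (m:ℝ) + 2) * Real.sqrt ((m:ℝ) + 1) := by positivity
  nlinarith [Real.sqrt_nonneg ((m:ℝ) + 2), sq_nonneg ((2 * (m:ℝ) + 1) * Real.sqrt ((m:ℝ) + 2))]

lemma dfact_sq_le (m : ℕ) :
    (((2 * m - 1)‼ : ℕ) : ℝ) ^ 2 * Real.sqrt ((m:ℝ) + 1) ≤ ((2 * m).factorial : ℝ) := by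
  induction m with
  | zero => simp [Nat.doubleFactorial]
  | succ m ih =>
    have hdf : ((2 * (m + 1) - 1)‼ : ℕ) = (2 * m + 1) * ((2 * m - 1)‼ : ℕ) := by
      cases m with
      | zero => simp [Nat.doubleFactorial]
      | succ m =>
        have : 2 * (m + 1 + 1) - 1 = (2 * (m + 1) - 1) + 2 := by omega
        rw [this]
        have h2 : 2 * (m+1) - 1 + 2 = 2 * (m+1) + 1 := by omega
        rw [Nat.doubleFactorial]
        congr 1
    have hfact : ((2 * (m + 1)).factorial : ℝ) =
        (2 * (m:ℝ) + 2) * (2 * (m:ℝ) + 1) * ((2 * m).factorial : ℝ) := by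
      have : 2 * (m + 1) = (2 * m + 1) + 1 := by omega
      rw [this, Nat.factorial_succ, Nat.factorial_succ]
      push_cast
      ring
    rw [hdf, hfact]
    push_cast
    have key := key_sqrt_ineq m
    have hs1 : (0:ℝ) ≤ Real.sqrt ((m:ℝ)+1) := Real.sqrt_nonneg _
    have hs2 : (0:ℝ) ≤ Real.sqrt ((m:ℝ)+2) := Real.sqrt_nonneg _
    have hD : (0:ℝ) ≤ (((2 * m - 1)‼ : ℕ) : ℝ) ^ 2 := sq_nonneg _
    have goal1 : ((2 * (m:ℝ) + 1) * (((2 * m - 1)‼ : ℕ) : ℝ)) ^ 2 * Real.sqrt ((m:ℝ) + 1 + 1) ≤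
        (2 * (m:ℝ) + 2) * (2 * (m:ℝ) + 1) * ((2 * m).factorial : ℝ) := by
      have e : ((m:ℝ) + 1 + 1) = ((m:ℝ) + 2) := by ring
      rw [e, mul_pow]
      calc (2 * (m:ℝ) + 1) ^ 2 * (((2 * m - 1)‼ : ℕ) : ℝ) ^ 2 * Real.sqrt ((m:ℝ) + 2)
          = (2 * (m:ℝ) + 1) * (((2 * m - 1)‼ : ℕ) : ℝ) ^ 2 *
            ((2 * (m:ℝ) + 1) * Real.sqrt ((m:ℝ) + 2)) := by ring
        _ ≤ (2 * (m:ℝ) + 1) * (((2 * m - 1)‼ : ℕ) : ℝ) ^ 2 *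
            ((2 * (m:ℝ) + 2) * Real.sqrt ((m:ℝ) + 1)) := by
            apply mul_le_mul_of_nonneg_left key (by positivity)
        _ = (2 * (m:ℝ) + 2) * (2 * (m:ℝ) + 1) *
            ((((2 * m - 1)‼ : ℕ) : ℝ) ^ 2 * Real.sqrt ((m:ℝ) + 1)) := by ring
        _ ≤ (2 * (m:ℝ) + 2) * (2 * (m:ℝ) + 1) * ((2 * m).factorial : ℝ) := by
            apply mul_le_mul_of_nonneg_left ih (by positivity)
    convert goal1 using 2
end

noncomputable section
lemma aeval_zero_hermite (n : ℕ) :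
    (aeval (0:ℝ) (hermite n)) = ((coeff (hermite n) 0 : ℤ) : ℝ) := by
  rw [aeval_def, eval₂_at_zero]
  simp

lemma aeval_zero_hermite_odd (m : ℕ) : (aeval (0:ℝ) (hermite (2 * m + 1))) = 0 := by
  rw [aeval_zero_hermite, coeff_hermite_of_odd_add (by rw [add_zero]; exact ⟨m, by omega⟩)]
  simp

lemma aeval_zero_hermite_even_sq (m : ℕ) :
    (aeval (0:ℝ) (hermite (2 * m))) ^ 2 * Real.sqrt ((m:ℝ) + 1) ≤ ((2 * m).factorial : ℝ) := by
  have h := coeff_hermite_explicit m 0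
  rw [add_zero] at h
  rw [aeval_zero_hermite, h]
  push_cast
  rw [mul_pow, mul_pow]
  simp only [Nat.choose_zero_right, Nat.cast_one, one_pow, mul_one]
  have : ((-1:ℝ)^m)^2 = 1 := by
    rw [← pow_mul, mul_comm, pow_mul]; norm_num
  rw [this, one_mul]
  exact dfact_sq_le m

lemma hE_zero_eq (k : ℕ) : hE k 0 =
    ((Nat.factorial k : ℝ) * Real.sqrt Real.pi)⁻¹ *
      (2 * (aeval (0:ℝ) (hermite (k+1)))^2 + (2*(k:ℝ)+1) * (aeval (0:ℝ) (hermite k))^2) := by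
  have hc : ((Real.sqrt (Nat.factorial k * Real.sqrt Real.pi))⁻¹)^2 =
      ((Nat.factorial k : ℝ) * Real.sqrt Real.pi)⁻¹ := by
    rw [← Real.sqrt_inv, Real.sq_sqrt (by positivity)]
  have h0 : Real.sqrt 2 * (0:ℝ) = 0 := mul_zero _
  have he : Real.exp (-(0:ℝ)^2/2) = 1 := by norm_num
  rw [hE, hw, hermiteFun_eq, h0, he]
  rw [← hc]
  ring_nf
  rw [Real.sq_sqrt (by norm_num : (0:ℝ) ≤ 2)]
  ring
end

noncomputable section
lemma sqrt_pi_ge_one : 1 ≤ Real.sqrt Real.pi := by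
  rw [show (1:ℝ) = Real.sqrt 1 by simp]
  exact Real.sqrt_le_sqrt (by linarith [Real.pi_gt_three])

lemma aux_div (F S A B P2 c1 D : ℝ) (hF : 0 < F) (hS : 1 ≤ S) (hA : 0 < A) (hB : 0 ≤ B)
    (hP : P2 * A ≤ D) (hP0 : 0 ≤ P2) (hc1 : 0 ≤ c1) (hkey : c1 * D ≤ 4 * A * B * F) :
    (F * S)⁻¹ * (c1 * P2) ≤ 4 * B := by
  have h1 : c1 * P2 * A ≤ (4 * B * F) * A := by nlinarith
  have h2 : c1 * P2 ≤ 4 * B * F := le_of_mul_le_mul_right h1 hA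
  have hS0 : 0 < S := lt_of_lt_of_le one_pos hS
  calc (F * S)⁻¹ * (c1 * P2) ≤ (F * S)⁻¹ * (4 * B * F) := by
        apply mul_le_mul_of_nonneg_left h2 (by positivity)
    _ = 4 * B * S⁻¹ := by field_simp
    _ ≤ 4 * B := by
        apply mul_le_of_le_one_right (by positivity)
        exact inv_le_one_of_one_le₀ hS

lemma le_of_sq_le_sq' {a b : ℝ} (h : a ^ 2 ≤ b ^ 2) (ha : 0 ≤ a) (hb : 0 ≤ b) : a ≤ b := by
  have := Real.sqrt_le_sqrt h
  rwa [Real.sqrt_sq ha, Real.sqrt_sq hb] at this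

lemma hE_zero_le (k : ℕ) (hk : 1 ≤ k) : hE k 0 ≤ 4 * Real.sqrt k := by
  have hS := sqrt_pi_ge_one
  have hBnn : (0:ℝ) ≤ Real.sqrt k := Real.sqrt_nonneg _
  have hB2 : Real.sqrt (k:ℝ) ^ 2 = (k:ℝ) := Real.sq_sqrt (by positivity)
  rcases Nat.even_or_odd k with ⟨m, hm⟩ | ⟨m, hm⟩
  · -- k = 2m, m ≥ 1
    have hm2 : k = 2 * m := by omega
    subst hm2
    have hm1 : 1 ≤ m := by omega
    rw [hE_zero_eq, aeval_zero_hermite_odd m]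
    have hP := aeval_zero_hermite_even_sq m
    have hA2 : Real.sqrt ((m:ℝ) + 1) ^ 2 = (m:ℝ) + 1 := Real.sq_sqrt (by positivity)
    have hApos : 0 < Real.sqrt ((m:ℝ) + 1) := Real.sqrt_pos.2 (by positivity)
    have hF : (0:ℝ) < ((2*m).factorial : ℝ) := by exact_mod_cast Nat.factorial_pos _
    have key : (2*((2*m : ℕ):ℝ)+1) ≤ 4 * Real.sqrt ((m:ℝ) + 1) * Real.sqrt ((2*m : ℕ):ℝ) := by
      apply le_of_sq_le_sq' _ (by push_cast; positivity) (by positivity)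
      rw [mul_pow, mul_pow, hA2, hB2]
      push_cast
      have hm1' : (1:ℝ) ≤ (m:ℝ) := by exact_mod_cast hm1
      nlinarith [hm1', mul_self_nonneg ((m:ℝ)-1)]
    have goal := aux_div ((2*m).factorial : ℝ) (Real.sqrt Real.pi)
      (Real.sqrt ((m:ℝ) + 1)) (Real.sqrt ((2*m : ℕ):ℝ))
      ((aeval (0:ℝ) (hermite (2*m)))^2) (2*((2*m : ℕ):ℝ)+1) ((2*m).factorial : ℝ)
      hF hS hApos hBnn hP (sq_nonneg _) (by push_cast; positivity)
      (by nlinarith [hF, key])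
    calc ((2*m).factorial * Real.sqrt Real.pi : ℝ)⁻¹ *
          (2 * 0 ^ 2 + (2*((2*m : ℕ):ℝ)+1) * (aeval (0:ℝ) (hermite (2*m)))^2)
        = ((2*m).factorial * Real.sqrt Real.pi : ℝ)⁻¹ *
          ((2*((2*m : ℕ):ℝ)+1) * (aeval (0:ℝ) (hermite (2*m)))^2) := by ring
      _ ≤ 4 * Real.sqrt ((2*m : ℕ):ℝ) := goal
  · -- k = 2m+1
    have hm2 : k = 2 * m + 1 := hm
    subst hm2
    rw [hE_zero_eq, aeval_zero_hermite_odd m]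
    have hP' := aeval_zero_hermite_even_sq (m+1)
    have hcast : ((2*(m+1) : ℕ) : ℝ) = 2*(m:ℝ)+2 := by push_cast; ring
    have hA2 : Real.sqrt (((m+1:ℕ) : ℝ) + 1) ^ 2 = (m:ℝ) + 2 := by
      rw [Real.sq_sqrt (by positivity)]; push_cast; ring
    have hApos : 0 < Real.sqrt (((m+1:ℕ) : ℝ) + 1) := Real.sqrt_pos.2 (by positivity)
    have hF : (0:ℝ) < ((2*m+1).factorial : ℝ) := by exact_mod_cast Nat.factorial_pos _
    have hFact : ((2*(m+1)).factorial : ℝ) = (2*(m:ℝ)+2) * ((2*m+1).factorial : ℝ) := by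
      have : 2*(m+1) = (2*m+1) + 1 := by omega
      rw [this, Nat.factorial_succ]
      push_cast; ring
    have key : (2:ℝ) * ((2*(m+1)).factorial : ℝ) ≤
        4 * Real.sqrt (((m+1:ℕ) : ℝ) + 1) * Real.sqrt ((2*m+1 : ℕ):ℝ) * ((2*m+1).factorial : ℝ) := by
      rw [hFact]
      have key2 : (2:ℝ) * (2*(m:ℝ)+2) ≤
          4 * Real.sqrt (((m+1:ℕ) : ℝ) + 1) * Real.sqrt ((2*m+1 : ℕ):ℝ) := by
        apply le_of_sq_le_sq' _ (by positivity) (by positivity)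
        simp only [mul_pow]
        rw [hA2, hB2]
        push_cast
        nlinarith [sq_nonneg (m:ℝ)]
      nlinarith [hF, key2]
    have goal := aux_div ((2*m+1).factorial : ℝ) (Real.sqrt Real.pi)
      (Real.sqrt (((m+1:ℕ) : ℝ) + 1)) (Real.sqrt ((2*m+1 : ℕ):ℝ))
      ((aeval (0:ℝ) (hermite (2*(m+1))))^2) 2 ((2*(m+1)).factorial : ℝ)
      hF hS hApos hBnn hP' (sq_nonneg _) (by norm_num) key
    have hidx : 2*m+1+1 = 2*(m+1) := by omega
    rw [hidx]
    calc ((2*m+1).factorial * Real.sqrt Real.pi : ℝ)⁻¹ *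
          (2 * (aeval (0:ℝ) (hermite (2*(m+1))))^2 + (2*((2*m+1 : ℕ):ℝ)+1) * 0^2)
        = ((2*m+1).factorial * Real.sqrt Real.pi : ℝ)⁻¹ *
          (2 * (aeval (0:ℝ) (hermite (2*(m+1))))^2) := by ring
      _ ≤ 4 * Real.sqrt ((2*m+1 : ℕ):ℝ) := goal
end

noncomputable section
lemma sq_hermiteFun_le (k : ℕ) (hk : 1 ≤ k) (t : ℝ) (ht : t ^ 2 ≤ (k:ℝ)) :
    (hermiteFun k t) ^ 2 ≤ 4 / Real.sqrt k := by
  have hk0 : (0:ℝ) < k := by exact_mod_cast hk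
  have hs0 : 0 < Real.sqrt k := Real.sqrt_pos.2 hk0
  have hs2 : Real.sqrt k ^ 2 = (k:ℝ) := Real.sq_sqrt hk0.le
  have h1 : (2*(k:ℝ)+1 - t^2) * (hermiteFun k t)^2 ≤ hE k t := by
    rw [hE]; nlinarith [sq_nonneg (hw k t)]
  have h2 : (2*(k:ℝ)+1 - t^2) * (hermiteFun k t)^2 ≤ 4 * Real.sqrt k :=
    h1.trans ((hE_le_hE_zero k t).trans (hE_zero_le k hk))
  have h3 : (k:ℝ) * (hermiteFun k t)^2 ≤ 4 * Real.sqrt k := by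
    nlinarith [sq_nonneg (hermiteFun k t)]
  rw [le_div_iff₀ hs0]
  have h4 : (hermiteFun k t)^2 * Real.sqrt k * Real.sqrt k ≤ 4 * Real.sqrt k := by
    nlinarith [h3, hs2]
  exact le_of_mul_le_mul_right h4 hs0
end

noncomputable section
lemma integral_deriv_hE (k : ℕ) (a b : ℝ) :
    ∫ t in a..b, (-2 * t * (hermiteFun k t) ^ 2) = hE k b - hE k a := by
  apply intervalIntegral.integral_eq_sub_of_hasDerivAt (fun t _ => hasDerivAt_hE k t)
  exact (Continuous.intervalIntegrable ((continuous_const.mul continuous_id).mul ((continuous_hermiteFun k).pow 2)) a b)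

theorem hermiteFun_local_L2_bound' :
    ∃ C : ℝ, 0 < C ∧
      ∀ M : ℝ, 1 ≤ M → ∀ k : ℕ, 1 ≤ k →
        (∫ t in (-M)..M, (hermiteFun k t) ^ 2) ≤ C * M * ((k : ℝ) ^ (-(1 / 2) : ℝ)) := by
  refine ⟨20, by norm_num, fun M hM k hk => ?_⟩
  have hk0 : (0:ℝ) < k := by exact_mod_cast hk
  set s := Real.sqrt (k:ℝ) with hs
  have hs0 : 0 < s := Real.sqrt_pos.2 hk0
  have hs1 : 1 ≤ s := by
    rw [hs, show (1:ℝ) = Real.sqrt 1 by simp]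
    exact Real.sqrt_le_sqrt (by exact_mod_cast hk)
  have hs2 : s ^ 2 = (k:ℝ) := Real.sq_sqrt hk0.le
  have hrpow : ((k:ℝ) ^ (-(1 / 2) : ℝ)) = s⁻¹ := by
    rw [Real.rpow_neg hk0.le, hs, Real.sqrt_eq_rpow]
  rw [hrpow]
  have hM0 : 0 < M := lt_of_lt_of_le one_pos hM
  have hcont : Continuous (fun t => (hermiteFun k t) ^ 2) := (continuous_hermiteFun k).pow 2
  have hInt : ∀ a b : ℝ, IntervalIntegrable (fun t => (hermiteFun k t) ^ 2) volume a b :=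
    fun a b => hcont.intervalIntegrable a b
  have hpt : ∀ t ∈ Set.Icc (-s) s, (hermiteFun k t) ^ 2 ≤ 4 / s := by
    intro t ht
    apply sq_hermiteFun_le k hk
    rw [← hs2]
    obtain ⟨h1, h2⟩ := ht
    nlinarith
  -- bound on a symmetric subinterval [-(min M s), min M s]
  rcases le_total M s with hMs | hsM
  · -- M ≤ s
    have hb : ∀ t ∈ Set.Icc (-M) M, (hermiteFun k t) ^ 2 ≤ 4 / s := by
      intro t ht
      exact hpt t ⟨by linarith [ht.1], by linarith [ht.2]⟩
    calc (∫ t in (-M)..M, (hermiteFun k t) ^ 2)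
        ≤ ∫ _ in (-M)..M, (4 / s) := by
          apply intervalIntegral.integral_mono_on (by linarith) (hInt _ _)
            intervalIntegrable_const hb
      _ = (M - (-M)) * (4 / s) := by
          rw [intervalIntegral.integral_const, smul_eq_mul]
      _ = 8 * M * s⁻¹ := by field_simp; ring
      _ ≤ 20 * M * s⁻¹ := by
          have : (0:ℝ) ≤ M * s⁻¹ := by positivity
          nlinarith
  · -- s ≤ M
    have hMsr : 1 ≤ M / s := (one_le_div hs0).2 hsM
    -- middle part
    have hmid : (∫ t in (-s)..s, (hermiteFun k t) ^ 2) ≤ 8 := by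
      calc (∫ t in (-s)..s, (hermiteFun k t) ^ 2)
          ≤ ∫ _ in (-s)..s, (4 / s) := by
            apply intervalIntegral.integral_mono_on (by linarith) (hInt _ _)
              intervalIntegrable_const hpt
        _ = (s - (-s)) * (4 / s) := by
            rw [intervalIntegral.integral_const, smul_eq_mul]
        _ = 8 := by field_simp; ring
    -- right part
    have hright : (∫ t in s..M, (hermiteFun k t) ^ 2) ≤ 2 := by
      have hkey : ∫ t in s..M, (2 * s * (hermiteFun k t) ^ 2) ≤ 4 * s := by
        calc ∫ t in s..M, (2 * s * (hermiteFun k t) ^ 2)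
            ≤ ∫ t in s..M, (2 * t * (hermiteFun k t) ^ 2) := by
              apply intervalIntegral.integral_mono_on hsM
                ((hInt s M).const_mul _)
                (Continuous.intervalIntegrable ((continuous_const.mul continuous_id).mul ((continuous_hermiteFun k).pow 2)) s M)
              intro t ht
              simp only [Pi.mul_apply, Pi.pow_apply, id_eq]
              nlinarith [sq_nonneg (hermiteFun k t), ht.1, hs0]
          _ = -(hE k M - hE k s) := by
              rw [← integral_deriv_hE k s M, ← intervalIntegral.integral_neg]
              congr 1 with t
              ring
          _ ≤ 4 * s := by
              have h1 := hE_nonneg k M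
              have h2 := (hE_le_hE_zero k s).trans (hE_zero_le k hk)
              rw [hs] at *
              linarith
      have h2s : ∫ t in s..M, (2 * s * (hermiteFun k t) ^ 2) =
          2 * s * ∫ t in s..M, (hermiteFun k t) ^ 2 := intervalIntegral.integral_const_mul _ _
      rw [h2s] at hkey
      nlinarith
    -- left part
    have hleft : (∫ t in (-M)..(-s), (hermiteFun k t) ^ 2) ≤ 2 := by
      have hkey : ∫ t in (-M)..(-s), (2 * s * (hermiteFun k t) ^ 2) ≤ 4 * s := by
        calc ∫ t in (-M)..(-s), (2 * s * (hermiteFun k t) ^ 2)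
            ≤ ∫ t in (-M)..(-s), (-2 * t * (hermiteFun k t) ^ 2) := by
              apply intervalIntegral.integral_mono_on (by linarith)
                ((hInt _ _).const_mul _)
                (Continuous.intervalIntegrable ((continuous_const.mul continuous_id).mul ((continuous_hermiteFun k).pow 2)) _ _)
              intro t ht
              have ht2 : t ≤ -s := ht.2
              simp only [Pi.mul_apply, Pi.pow_apply, id_eq]
              nlinarith [sq_nonneg (hermiteFun k t)]
          _ = hE k (-s) - hE k (-M) := integral_deriv_hE k (-M) (-s)
          _ ≤ 4 * s := by
              have h1 := hE_nonneg k (-M)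
              have h2 := (hE_le_hE_zero k (-s)).trans (hE_zero_le k hk)
              rw [hs] at *
              linarith
      have h2s : ∫ t in (-M)..(-s), (2 * s * (hermiteFun k t) ^ 2) =
          2 * s * ∫ t in (-M)..(-s), (hermiteFun k t) ^ 2 := intervalIntegral.integral_const_mul _ _
      rw [h2s] at hkey
      nlinarith
    have hsplit : (∫ t in (-M)..M, (hermiteFun k t) ^ 2) =
        (∫ t in (-M)..(-s), (hermiteFun k t) ^ 2) + (∫ t in (-s)..s, (hermiteFun k t) ^ 2) +
          (∫ t in s..M, (hermiteFun k t) ^ 2) := by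
      rw [intervalIntegral.integral_add_adjacent_intervals (hInt _ _) (hInt _ _),
        intervalIntegral.integral_add_adjacent_intervals (hInt _ _) (hInt _ _)]
    rw [hsplit]
    have h20 : (8:ℝ) + 2 + 2 ≤ 20 * (M/s) := by nlinarith
    calc (∫ t in (-M)..(-s), (hermiteFun k t) ^ 2) + (∫ t in (-s)..s, (hermiteFun k t) ^ 2) +
          (∫ t in s..M, (hermiteFun k t) ^ 2) ≤ 2 + 8 + 2 := by linarith
      _ ≤ 20 * M * s⁻¹ := by
          rw [mul_assoc, ← div_eq_mul_inv]
          linarith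
end

noncomputable section

/-- Local `L²` bound for the one-dimensional Hermite functions:
`∫_{-M}^{M} h_k(t)² dt ≤ C M k^{-1/2}`. -/
theorem hermiteFun_local_L2_bound :
    ∃ C : ℝ, 0 < C ∧
      ∀ M : ℝ, 1 ≤ M → ∀ k : ℕ, 1 ≤ k →
        (∫ t in (-M)..M, (hermiteFun k t) ^ 2) ≤ C * M * ((k : ℝ) ^ (-(1 / 2) : ℝ)) := by
  exact hermiteFun_local_L2_bound'

end
end
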